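/- Suppose the random variables X_1, …, X_n are mutually independent and for some i ∈ [n] and A_i ⊆ [n]∖{i} the decodability condition H[X_i | Y_N, X_{A_i}] = 0 holds. Then H[X_i] ≤ H[Y_N | X_{A_i}]. (The basic converse step used to bound each achievable rate by the server outputs.) -/

import Mathlib

/-!
Setup for the distributed index coding problem: `n` messages `X i` (finitely valued
random variables on a probability space `(Ω, μ)`), one server for each nonempty
subset `J` of `Fin n`, whose output `Y_J = φ_J (X_J)` is a deterministic function of
the messages indexed by `J`.  Shannon entropy `ent`, conditional entropy `cent` and
conditional mutual information `cmi` are defined from scratch.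
-/

open MeasureTheory Real

namespace DistIndexCoding

variable {Ω : Type*} [MeasurableSpace Ω]

/-- Shannon entropy (in nats) of a finitely-valued random variable. -/
noncomputable def ent {α : Type*} [Fintype α] (μ : Measure Ω) (X : Ω → α) : ℝ :=
  ∑ a : α, negMulLog (μ (X ⁻¹' {a})).toReal

/-- Conditional entropy `H[X | Y]`, defined via the chain rule `H[X|Y] = H[X,Y] - H[Y]`. -/
noncomputable def cent {α β : Type*} [Fintype α] [Fintype β]
    (μ : Measure Ω) (X : Ω → α) (Y : Ω → β) : ℝ :=
  ent μ (fun ω => (X ω, Y ω)) - ent μ Y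

/-- Conditional mutual information `I[X : Y | Z] = H[X | Z] - H[X | Y, Z]`. -/
noncomputable def cmi {α β γ : Type*} [Fintype α] [Fintype β] [Fintype γ]
    (μ : Measure Ω) (X : Ω → α) (Y : Ω → β) (Z : Ω → γ) : ℝ :=
  cent μ X Z - cent μ X (fun ω => (Y ω, Z ω))

variable {n : ℕ} {𝒳 : Fin n → Type*} {𝒴 : Finset (Fin n) → Type*}

/-- The subtuple `X_S = (X_i : i ∈ S)`. -/
def subtuple (X : ∀ i, Ω → 𝒳 i) (S : Finset (Fin n)) : Ω → (∀ i : S, 𝒳 i.1) :=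
  fun ω i => X i.1 ω

/-- The tuple of server outputs `(Y_J = φ_J(X_J) : J satisfying p)`; taking
`p J := J.Nonempty` gives the full tuple `Y_N`. -/
def outputs (φ : ∀ J : Finset (Fin n), (∀ j : J, 𝒳 j.1) → 𝒴 J)
    (X : ∀ i, Ω → 𝒳 i) (p : Finset (Fin n) → Prop) [DecidablePred p] :
    Ω → (∀ J : {J : Finset (Fin n) // p J}, 𝒴 J.1) :=
  fun ω J => φ J.1 (fun j => X j.1 ω)

section Aux

/-- `negMulLog` is superadditive on nonnegative reals. -/
lemma negMulLog_sum_le {ι : Type*} (s : Finset ι) (g : ι → ℝ) (hg : ∀ j ∈ s, 0 ≤ g j) :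
    negMulLog (∑ j ∈ s, g j) ≤ ∑ j ∈ s, negMulLog (g j) := by
  set S := ∑ j ∈ s, g j with hS
  have hS0 : 0 ≤ S := Finset.sum_nonneg hg
  have : negMulLog S = ∑ j ∈ s, g j * (-Real.log S) := by
    rw [← Finset.sum_mul, ← hS]
    simp [Real.negMulLog, mul_comm]
  rw [this]
  refine Finset.sum_le_sum fun j hj => ?_
  rcases eq_or_lt_of_le (hg j hj) with h0 | h0
  · simp [← h0, Real.negMulLog]
  · have hle : g j ≤ S := Finset.single_le_sum hg hj
    have : Real.log (g j) ≤ Real.log S := Real.log_le_log h0 hle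
    have := mul_le_mul_of_nonneg_left (neg_le_neg this) (le_of_lt h0)
    simpa [Real.negMulLog, mul_comm] using this

/-- Entropy decreases under (deterministic) maps. -/
lemma ent_map_le {α β : Type*} [Fintype α] [Fintype β] (μ : Measure Ω) [IsProbabilityMeasure μ]
    (Z : Ω → α) (hZ : ∀ a : α, MeasurableSet (Z ⁻¹' {a})) (f : α → β) :
    ent μ (fun ω => f (Z ω)) ≤ ent μ Z := by
  classical
  have key : ∀ b : β, (μ ((fun ω => f (Z ω)) ⁻¹' {b})).toReal
      = ∑ a ∈ Finset.univ.filter (fun a => f a = b), (μ (Z ⁻¹' {a})).toReal := by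
    intro b
    have hset : (fun ω => f (Z ω)) ⁻¹' {b}
        = ⋃ a ∈ Finset.univ.filter (fun a => f a = b), Z ⁻¹' {a} := by
      ext ω
      simp [Set.mem_preimage]
    rw [hset, measure_biUnion_finset ?_ (fun a _ => hZ a)]
    · rw [ENNReal.toReal_sum]
      intro a _
      exact (measure_lt_top μ _).ne
    · intro a _ b' _ hab
      apply Set.disjoint_left.2
      intro ω h1 h2
      exact hab (by simp_all)
  calc ent μ (fun ω => f (Z ω))
      = ∑ b : β, negMulLog (∑ a ∈ Finset.univ.filter (fun a => f a = b),
          (μ (Z ⁻¹' {a})).toReal) := by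
        unfold ent; exact Finset.sum_congr rfl fun b _ => by rw [key b]
    _ ≤ ∑ b : β, ∑ a ∈ Finset.univ.filter (fun a => f a = b),
          negMulLog ((μ (Z ⁻¹' {a})).toReal) := by
        refine Finset.sum_le_sum fun b _ => negMulLog_sum_le _ _ fun a _ => ENNReal.toReal_nonneg
    _ = ent μ Z := by
        unfold ent
        rw [Finset.sum_fiberwise_eq_sum_filter Finset.univ Finset.univ f
          (fun a => negMulLog ((μ (Z ⁻¹' {a})).toReal))]
        simp

/-- Probabilities of a finitely-valued random variable sum to 1. -/
lemma sum_prob_eq_one {α : Type*} [Fintype α] (μ : Measure Ω) [IsProbabilityMeasure μ]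
    (Z : Ω → α) (hZ : ∀ a : α, MeasurableSet (Z ⁻¹' {a})) :
    ∑ a : α, (μ (Z ⁻¹' {a})).toReal = 1 := by
  classical
  have hset : Set.univ = ⋃ a ∈ (Finset.univ : Finset α), Z ⁻¹' {a} := by
    ext ω; simp
  have hmeas : μ Set.univ = ∑ a : α, μ (Z ⁻¹' {a}) := by
    rw [hset, measure_biUnion_finset ?_ (fun a _ => hZ a)]
    intro a _ b' _ hab
    apply Set.disjoint_left.2
    intro ω h1 h2
    exact hab (by simp_all)
  have : (μ Set.univ).toReal = ∑ a : α, (μ (Z ⁻¹' {a})).toReal := by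
    rw [hmeas, ENNReal.toReal_sum]
    intro a _
    exact (measure_lt_top μ _).ne
  simpa using this.symm

/-- Entropy is additive for independent random variables. -/
lemma ent_pair_of_indep {α β : Type*} [Fintype α] [Fintype β]
    [MeasurableSpace α] [MeasurableSingletonClass α]
    [MeasurableSpace β] [MeasurableSingletonClass β]
    (μ : Measure Ω) [IsProbabilityMeasure μ]
    (U : Ω → α) (W : Ω → β) (hU : Measurable U) (hW : Measurable W)
    (h : ProbabilityTheory.IndepFun U W μ) :
    ent μ (fun ω => (U ω, W ω)) = ent μ U + ent μ W := by
  classical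
  have key : ∀ (a : α) (b : β), (μ ((fun ω => (U ω, W ω)) ⁻¹' {(a, b)})).toReal
      = (μ (U ⁻¹' {a})).toReal * (μ (W ⁻¹' {b})).toReal := by
    intro a b
    have hset : (fun ω => (U ω, W ω)) ⁻¹' {(a, b)} = U ⁻¹' {a} ∩ W ⁻¹' {b} := by
      ext ω; simp [Prod.ext_iff]
    rw [hset, h.measure_inter_preimage_eq_mul _ _ (measurableSet_singleton a)
      (measurableSet_singleton b), ENNReal.toReal_mul]
  have hsU : ∑ a : α, (μ (U ⁻¹' {a})).toReal = 1 :=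
    sum_prob_eq_one μ U fun a => hU (measurableSet_singleton a)
  have hsW : ∑ b : β, (μ (W ⁻¹' {b})).toReal = 1 :=
    sum_prob_eq_one μ W fun b => hW (measurableSet_singleton b)
  calc ent μ (fun ω => (U ω, W ω))
      = ∑ p : α × β, negMulLog ((μ (U ⁻¹' {p.1})).toReal * (μ (W ⁻¹' {p.2})).toReal) := by
        unfold ent; exact Finset.sum_congr rfl fun p _ => by rw [← key p.1 p.2]
    _ = ∑ a : α, ∑ b : β, ((μ (W ⁻¹' {b})).toReal * negMulLog ((μ (U ⁻¹' {a})).toReal)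
          + (μ (U ⁻¹' {a})).toReal * negMulLog ((μ (W ⁻¹' {b})).toReal)) := by
        rw [← Finset.sum_product']
        exact Finset.sum_congr rfl fun p _ => Real.negMulLog_mul _ _
    _ = ent μ U + ent μ W := by
        unfold ent
        have e1 : ∀ a : α, ∑ b : β, ((μ (W ⁻¹' {b})).toReal * negMulLog ((μ (U ⁻¹' {a})).toReal)
            + (μ (U ⁻¹' {a})).toReal * negMulLog ((μ (W ⁻¹' {b})).toReal))
            = negMulLog ((μ (U ⁻¹' {a})).toReal)
              + (μ (U ⁻¹' {a})).toReal * ∑ b : β, negMulLog ((μ (W ⁻¹' {b})).toReal) := by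
          intro a
          rw [Finset.sum_add_distrib, ← Finset.sum_mul, hsW, one_mul, ← Finset.mul_sum]
        rw [Finset.sum_congr rfl fun a _ => e1 a, Finset.sum_add_distrib,
          ← Finset.sum_mul, hsU, one_mul]

end Aux

/-- **Basic converse step**: if `X_1, …, X_n` are mutually independent and
receiver `i` with side information `A_i ⊆ [n]∖{i}` can decode,
i.e. `H[X_i | Y_N, X_{A_i}] = 0`, then `H[X_i] ≤ H[Y_N | X_{A_i}]`. -/
theorem basic_converse_step
    [∀ i, Fintype (𝒳 i)] [∀ i, Nonempty (𝒳 i)]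
    [∀ i, MeasurableSpace (𝒳 i)] [∀ i, DiscreteMeasurableSpace (𝒳 i)]
    [∀ J, Fintype (𝒴 J)]
    (μ : Measure Ω) [IsProbabilityMeasure μ]
    (X : ∀ i, Ω → 𝒳 i) (hXmeas : ∀ i, Measurable (X i))
    (hindep : ProbabilityTheory.iIndepFun X μ)
    (φ : ∀ J : Finset (Fin n), (∀ j : J, 𝒳 j.1) → 𝒴 J)
    (i : Fin n) (A : Finset (Fin n)) (hA : i ∉ A)
    (hdec : cent μ (X i)
      (fun ω => (outputs φ X (fun J => J.Nonempty) ω, subtuple X A ω)) = 0) :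
    ent μ (X i) ≤ cent μ (outputs φ X (fun J => J.Nonempty)) (subtuple X A) := by
  classical
  set V := outputs φ X (fun J => J.Nonempty) with hVdef
  set W := subtuple X A with hWdef
  set T : Ω → (∀ j, 𝒳 j) := fun ω j => X j ω with hTdef
  have hTmeas : Measurable T := measurable_pi_lambda _ fun j => hXmeas j
  have hWmeas : Measurable W := measurable_pi_lambda _ fun j => hXmeas j.1
  have hmeasP : ∀ b, MeasurableSet ((fun ω => (X i ω, (V ω, W ω))) ⁻¹' {b}) := by
    intro b
    have heq : (fun ω => (X i ω, (V ω, W ω)))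
        = (fun x : (∀ j, 𝒳 j) => (x i,
            ((fun J : {J : Finset (Fin n) // J.Nonempty} => φ J.1 (fun j => x j.1)),
             (fun j : A => x j.1)))) ∘ T := rfl
    rw [heq, Set.preimage_comp]
    exact hTmeas ((Set.toFinite _).measurableSet)
  have hindepUW : ProbabilityTheory.IndepFun (X i) W μ := by
    have h := hindep.indepFun_finset {i} A (Finset.disjoint_singleton_left.mpr hA) hXmeas
    have h2 := h.comp
      (φ := fun g : (∀ j : ({i} : Finset (Fin n)), 𝒳 j) => g ⟨i, Finset.mem_singleton_self i⟩)
      (ψ := id) (_mγ := inferInstance) (measurable_pi_apply _) measurable_id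
    exact h2
  have h1 : ent μ (fun ω => (X i ω, W ω)) ≤ ent μ (fun ω => (X i ω, (V ω, W ω))) :=
    ent_map_le μ (fun ω => (X i ω, (V ω, W ω))) hmeasP (fun p => (p.1, p.2.2))
  have h2 : ent μ (fun ω => (X i ω, (V ω, W ω))) = ent μ (fun ω => (V ω, W ω)) := by
    unfold cent at hdec; linarith
  have h3 : ent μ (fun ω => (X i ω, W ω)) = ent μ (X i) + ent μ W :=
    ent_pair_of_indep μ _ _ (hXmeas i) hWmeas hindepUW
  unfold cent
  linarith

end DistIndexCoding
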